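/- Let ω(t) = (1 + t/4)·(1/y²)√-1 dz∧dz̄ + y·√-1 dw∧dw̄ on H×ℂ. Then det(g(t)) = (1 + t/4)/y, hence Ric(ω(t)) = Ric(ω₀) is independent of t, and ∂ω(t)/∂t = -Ric(ω(t)); i.e., ω(t) solves the Chern-Ricci flow for all t ≥ 0. -/

import Mathlib

open Complex

/-- Wirtinger derivative `∂/∂z_i` (i = 0 is the `z` variable, i = 1 is the `w`
variable) of a function on `ℂ × ℂ`. -/
noncomputable def wd (i : Fin 2) (f : ℂ × ℂ → ℂ) (p : ℂ × ℂ) : ℂ :=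
  if i = 0 then (fderiv ℝ f p (1, 0) - Complex.I * fderiv ℝ f p (Complex.I, 0)) / 2
  else (fderiv ℝ f p (0, 1) - Complex.I * fderiv ℝ f p (0, Complex.I)) / 2

/-- Wirtinger derivative `∂/∂z̄_i` of a function on `ℂ × ℂ`. -/
noncomputable def wdb (i : Fin 2) (f : ℂ × ℂ → ℂ) (p : ℂ × ℂ) : ℂ :=
  if i = 0 then (fderiv ℝ f p (1, 0) + Complex.I * fderiv ℝ f p (Complex.I, 0)) / 2
  else (fderiv ℝ f p (0, 1) + Complex.I * fderiv ℝ f p (0, Complex.I)) / 2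

/-- The coefficients of the evolved Tricerri metric
`ω(t) = (1 + t/4)(1/y²)√-1 dz∧dz̄ + y √-1 dw∧dw̄` on `H×ℂ` (index 0 = `z`,
index 1 = `w`). -/
noncomputable def tric (t : ℝ) (i j : Fin 2) (p : ℂ × ℂ) : ℂ :=
  if i = 0 ∧ j = 0 then (((1 + t / 4) / p.1.im ^ 2 : ℝ) : ℂ)
  else if i = 1 ∧ j = 1 then ((p.1.im : ℝ) : ℂ) else 0

noncomputable def T : ℂ × ℂ →L[ℝ] ℝ := Complex.imCLM.comp (ContinuousLinearMap.fst ℝ ℂ ℂ)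

lemma T_apply (v : ℂ × ℂ) : T v = v.1.im := rfl

lemma isOpenU : IsOpen {q : ℂ × ℂ | 0 < q.1.im} :=
  isOpen_Ioi.preimage (Complex.continuous_im.comp continuous_fst)

lemma fderiv_fc (c : ℝ) (hc : 0 < c) (q : ℂ × ℂ) (hq : 0 < q.1.im) :
    fderiv ℝ (fun q => ((Real.log (c / q.1.im) : ℝ) : ℂ)) q
      = -(Complex.ofRealCLM.comp ((q.1.im)⁻¹ • T)) := by
  have heq : (fun q : ℂ × ℂ => ((Real.log (c / q.1.im) : ℝ) : ℂ))
      =ᶠ[nhds q] fun q' => ((Real.log c : ℝ) : ℂ) - ((Real.log q'.1.im : ℝ) : ℂ) := by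
    filter_upwards [isOpenU.mem_nhds hq] with x hx
    rw [Real.log_div hc.ne' (ne_of_gt hx)]
    push_cast; ring
  rw [heq.fderiv_eq]
  have hinner : HasFDerivAt (fun q' : ℂ × ℂ => Real.log q'.1.im) ((q.1.im)⁻¹ • T) q :=
    by have := (Real.hasDerivAt_log (ne_of_gt hq)).comp_hasFDerivAt q T.hasFDerivAt; exact this
  have hG : HasFDerivAt (fun q' : ℂ × ℂ => ((Real.log q'.1.im : ℝ) : ℂ))
      (Complex.ofRealCLM.comp ((q.1.im)⁻¹ • T)) q :=
    Complex.ofRealCLM.hasFDerivAt.comp q hinner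
  exact (hG.const_sub _).fderiv

lemma wdb0_fc (c : ℝ) (hc : 0 < c) (q : ℂ × ℂ) (hq : 0 < q.1.im) :
    wdb 0 (fun q => ((Real.log (c / q.1.im) : ℝ) : ℂ)) q
      = Complex.I * (-((((q.1.im)⁻¹ : ℝ)) : ℂ)) / 2 := by
  simp only [wdb, if_pos rfl, fderiv_fc c hc q hq]
  simp [T_apply]

lemma wdb1_fc (c : ℝ) (hc : 0 < c) (q : ℂ × ℂ) (hq : 0 < q.1.im) :
    wdb 1 (fun q => ((Real.log (c / q.1.im) : ℝ) : ℂ)) q = 0 := by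
  simp only [wdb, fderiv_fc c hc q hq]
  norm_num [T_apply]

lemma h0_fderiv (p : ℂ × ℂ) (hp : 0 < p.1.im) :
    HasFDerivAt (fun q : ℂ × ℂ => Complex.I * (-((((q.1.im)⁻¹ : ℝ)) : ℂ)) / 2)
      ((Complex.I * (-1) / 2) • (Complex.ofRealCLM.comp ((-(p.1.im ^ 2)⁻¹) • T))) p := by
  have hinner : HasFDerivAt (fun q' : ℂ × ℂ => (q'.1.im)⁻¹) ((-(p.1.im ^ 2)⁻¹) • T) p :=
    (hasDerivAt_inv (ne_of_gt hp)).comp_hasFDerivAt p T.hasFDerivAt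
  have h2 : HasFDerivAt (fun q' : ℂ × ℂ => ((((q'.1.im)⁻¹ : ℝ)) : ℂ))
      (Complex.ofRealCLM.comp ((-(p.1.im ^ 2)⁻¹) • T)) p :=
    Complex.ofRealCLM.hasFDerivAt.comp p hinner
  have := h2.const_mul (Complex.I * (-1) / 2)
  have hfun : (fun q : ℂ × ℂ => Complex.I * (-((((q.1.im)⁻¹ : ℝ)) : ℂ)) / 2)
      = fun y : ℂ × ℂ => Complex.I * (-1) / 2 * ((((y.1.im)⁻¹ : ℝ)) : ℂ) := by
    funext q; ring
  rw [hfun]; exact this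

lemma key (c : ℝ) (hc : 0 < c) (i j : Fin 2) (p : ℂ × ℂ) (hp : 0 < p.1.im) :
    wd i (wdb j (fun q => ((Real.log (c / q.1.im) : ℝ) : ℂ))) p
      = if i = 0 ∧ j = 0 then (((1 / 4) / p.1.im ^ 2 : ℝ) : ℂ) else 0 := by
  fin_cases j
  · have heq : wdb 0 (fun q => ((Real.log (c / q.1.im) : ℝ) : ℂ))
        =ᶠ[nhds p] fun q => Complex.I * (-((((q.1.im)⁻¹ : ℝ)) : ℂ)) / 2 := by
      filter_upwards [isOpenU.mem_nhds hp] with x hx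
      exact wdb0_fc c hc x hx
    have hfe : fderiv ℝ (wdb 0 fun q => ((Real.log (c / q.1.im) : ℝ) : ℂ)) p
        = (Complex.I * (-1) / 2) • (Complex.ofRealCLM.comp ((-(p.1.im ^ 2)⁻¹) • T)) := by
      rw [heq.fderiv_eq]; exact (h0_fderiv p hp).fderiv
    fin_cases i <;> simp [wd, hfe, T_apply] <;> ring_nf <;> simp [Complex.I_sq] <;> ring_nf
  · have heq : wdb 1 (fun q => ((Real.log (c / q.1.im) : ℝ) : ℂ))
        =ᶠ[nhds p] fun _ => (0 : ℂ) := by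
      filter_upwards [isOpenU.mem_nhds hp] with x hx
      exact wdb1_fc c hc x hx
    have hf : fderiv ℝ (wdb 1 (fun q => ((Real.log (c / q.1.im) : ℝ) : ℂ))) p = 0 := by
      rw [heq.fderiv_eq]; simp
    fin_cases i <;> simp [wd, hf]

/-- For `ω(t) = (1 + t/4)(1/y²)√-1 dz∧dz̄ + y √-1 dw∧dw̄` on `H×ℂ` one has
`det g(t) = (1+t/4)/y`, hence `Ric(ω(t)) = -√-1 ∂∂̄ log det g(t)` coincides with
`Ric(ω₀)` (it is independent of `t`), and `∂ω(t)/∂t = -Ric(ω(t))`, i.e. `ω(t)`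
solves the Chern-Ricci flow for all `t ≥ 0`. -/
theorem stmt2 (t : ℝ) (ht : 0 ≤ t) (p : ℂ × ℂ) (hp : 0 < p.1.im) :
    (tric t 0 0 p * tric t 1 1 p - tric t 0 1 p * tric t 1 0 p
        = (((1 + t / 4) / p.1.im : ℝ) : ℂ)) ∧
    (∀ i j : Fin 2,
      -wd i (wdb j (fun q => ((Real.log ((1 + t / 4) / q.1.im) : ℝ) : ℂ))) p
        = -wd i (wdb j (fun q => ((Real.log (1 / q.1.im) : ℝ) : ℂ))) p) ∧
    (∀ i j : Fin 2,
      deriv (fun s : ℝ => tric s i j p) t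
        = wd i (wdb j (fun q => ((Real.log ((1 + t / 4) / q.1.im) : ℝ) : ℂ))) p) := by
  have hc : (0:ℝ) < 1 + t / 4 := by linarith
  have hy : (p.1.im : ℂ) ≠ 0 := by exact_mod_cast hp.ne'
  refine ⟨?_, ?_, ?_⟩
  · simp only [tric]
    norm_num
    field_simp
  · intro i j
    rw [key _ hc i j p hp, key 1 one_pos i j p hp]
  · intro i j
    rw [key _ hc i j p hp]
    have h : HasDerivAt (fun s : ℝ => (1 + s / 4) / p.1.im ^ 2) ((1 / 4) / p.1.im ^ 2) t := by
      simpa using (((hasDerivAt_id t).div_const 4).const_add 1).div_const (p.1.im ^ 2)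
    have h2 : HasDerivAt (fun s : ℝ => (((1 + s / 4) / p.1.im ^ 2 : ℝ) : ℂ))
        (((1 / 4) / p.1.im ^ 2 : ℝ) : ℂ) t :=
      Complex.ofRealCLM.hasFDerivAt.comp_hasDerivAt t h
    fin_cases i <;> fin_cases j <;> simp only [Fin.mk_zero, Fin.mk_one, Fin.isValue]
    · have hfun : (fun s : ℝ => tric s 0 0 p)
          = fun s : ℝ => (((1 + s / 4) / p.1.im ^ 2 : ℝ) : ℂ) := by
        funext s; simp [tric]
      rw [hfun, h2.deriv]
      norm_num
    · have hfun : (fun s : ℝ => tric s 0 1 p) = fun _ : ℝ => (0 : ℂ) := by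
        funext s; simp [tric]
      rw [hfun, deriv_const]; norm_num
    · have hfun : (fun s : ℝ => tric s 1 0 p) = fun _ : ℝ => (0 : ℂ) := by
        funext s; simp [tric]
      rw [hfun, deriv_const]; norm_num
    · have hfun : (fun s : ℝ => tric s 1 1 p) = fun _ : ℝ => ((p.1.im : ℝ) : ℂ) := by
        funext s; simp [tric]
      rw [hfun, deriv_const]; norm_num
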